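/- Let H ≤ G with [G:H] = 2 and |H| = n, and S ⊆ G \ H with the pair graph G(G,H,S) connected. If |S| ≥ n + 2 − 2√n, then G(G,H,S) is a bipartite Ramanujan graph, i.e., every eigenvalue μ of its adjacency matrix other than ±|S| satisfies |μ| ≤ 2√(|S|−1). -/
import Mathlib
open scoped Pointwise Classical
open Matrix

def pairGraph {G : Type*} [Group G] (H : Subgroup G) (S : Set G) : SimpleGraph G :=
  SimpleGraph.fromRel (fun x y => ∃ h ∈ (H : Set G), ∃ s ∈ S, x = h ∧ y = h * s)

section
variable {G : Type*} [Group G] (H : Subgroup G) (S : Set G)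

lemma pairGraph_adj (hSH : ∀ s ∈ S, s ∉ H) (x y : G) :
    (pairGraph H S).Adj x y ↔
      (x ∈ H ∧ ∃ s ∈ S, y = x * s) ∨ (y ∈ H ∧ ∃ s ∈ S, x = y * s) := by
  constructor
  · rintro ⟨hne, ⟨h, hH, s, hs, rfl, rfl⟩ | ⟨h, hH, s, hs, rfl, rfl⟩⟩
    · exact Or.inl ⟨hH, s, hs, rfl⟩
    · exact Or.inr ⟨hH, s, hs, rfl⟩
  · rintro (⟨hx, s, hs, rfl⟩ | ⟨hy, s, hs, rfl⟩)
    · refine ⟨?_, Or.inl ⟨x, hx, s, hs, rfl, rfl⟩⟩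
      intro h
      exact hSH s hs (by simpa using (mul_left_cancel (a := x) (by rw [← h, mul_one]) : (1:G) = s) ▸ H.one_mem)
    · refine ⟨?_, Or.inr ⟨y, hy, s, hs, rfl, rfl⟩⟩
      intro h
      exact hSH s hs (by simpa using (mul_left_cancel (a := y) (by rw [h, mul_one]) : (1:G) = s) ▸ H.one_mem)

lemma pairGraph_nbr_mem (hSH : ∀ s ∈ S, s ∉ H) (hindex : H.index = 2) (x y : G)
    (h : (pairGraph H S).Adj x y) : (x ∈ H ↔ y ∉ H) := by
  rcases (pairGraph_adj H S hSH x y).1 h with ⟨hx, s, hs, rfl⟩ | ⟨hy, s, hs, rfl⟩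
  · have : x * s ∉ H := by
      rw [Subgroup.mul_mem_iff_of_index_two hindex]
      simp [hx, hSH s hs]
    exact iff_of_true hx this
  · have : y * s ∉ H := by
      rw [Subgroup.mul_mem_iff_of_index_two hindex]
      simp [hy, hSH s hs]
    exact iff_of_false this (fun hn => hn hy)

variable [Fintype G]

lemma pairGraph_neighborFinset_mem (hSH : ∀ s ∈ S, s ∉ H) (x : G) (hx : x ∈ H) :
    (pairGraph H S).neighborFinset x = S.toFinset.image (fun s => x * s) := by
  ext y
  simp only [SimpleGraph.mem_neighborFinset, Finset.mem_image, Set.mem_toFinset]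
  rw [pairGraph_adj H S hSH]
  constructor
  · rintro (⟨_, s, hs, rfl⟩ | ⟨hy, s, hs, rfl⟩)
    · exact ⟨s, hs, rfl⟩
    · have hsH : s ∈ H := by
        have := H.mul_mem (H.inv_mem hy) hx
        simpa using this
      exact absurd hsH (hSH s hs)
  · rintro ⟨s, hs, rfl⟩
    exact Or.inl ⟨hx, s, hs, rfl⟩

lemma pairGraph_neighborFinset_notMem (hSH : ∀ s ∈ S, s ∉ H) (hindex : H.index = 2)
    (x : G) (hx : x ∉ H) :
    (pairGraph H S).neighborFinset x = S.toFinset.image (fun s => x * s⁻¹) := by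
  ext y
  simp only [SimpleGraph.mem_neighborFinset, Finset.mem_image, Set.mem_toFinset]
  rw [pairGraph_adj H S hSH]
  constructor
  · rintro (⟨hxH, _⟩ | ⟨hy, s, hs, rfl⟩)
    · exact absurd hxH hx
    · exact ⟨s, hs, by group⟩
  · rintro ⟨s, hs, rfl⟩
    refine Or.inr ⟨?_, s, hs, by group⟩
    exact (Subgroup.mul_mem_iff_of_index_two hindex (a := x) (b := s⁻¹)).2
      (iff_of_false hx (fun h => hSH s hs (by simpa using H.inv_mem h)))

lemma pairGraph_degree (hSH : ∀ s ∈ S, s ∉ H) (hindex : H.index = 2) (x : G) :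
    (pairGraph H S).degree x = S.ncard := by
  rw [SimpleGraph.degree, Set.ncard_eq_toFinset_card']
  by_cases hx : x ∈ H
  · rw [pairGraph_neighborFinset_mem H S hSH x hx]
    exact Finset.card_image_of_injective _ (mul_right_injective x)
  · rw [pairGraph_neighborFinset_notMem H S hSH hindex x hx]
    exact Finset.card_image_of_injective _ (fun a b h => by
      simpa using congrArg (fun t => (x⁻¹ * t)⁻¹) h)
end

/-- with `[G:H] = 2`, `|H| = n`, `S ⊆ G \ H`, if the pair graph
is connected and `|S| ≥ n + 2 − 2√n`, then it is a bipartite Ramanujan graph: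
every eigenvalue `μ ≠ ±|S|` of its adjacency matrix satisfies
`|μ| ≤ 2√(|S|−1)`. -/
theorem pairGraph_ramanujan_of_large {G : Type*} [Group G] [Fintype G]
    (H : Subgroup G) (S : Set G) (hS : S.Nonempty)
    (hindex : H.index = 2)
    (n : ℕ) (hn : Nat.card H = n)
    (hSH : ∀ s ∈ S, s ∉ H)
    (hconn : (pairGraph H S).Connected)
    (hsize : (S.ncard : ℝ) ≥ (n : ℝ) + 2 - 2 * Real.sqrt n) :
    (pairGraph H S).Colorable 2 ∧
    ∀ μ : ℝ, Module.End.HasEigenvalue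
        (Matrix.toLin' ((pairGraph H S).adjMatrix ℝ)) μ →
      μ ≠ (S.ncard : ℝ) → μ ≠ -(S.ncard : ℝ) →
      |μ| ≤ 2 * Real.sqrt ((S.ncard : ℝ) - 1) := by
  classical
  set P := pairGraph H S with hP
  set k := S.ncard with hk
  set A := P.adjMatrix ℝ with hA
  constructor
  · refine ⟨SimpleGraph.Coloring.mk (fun x => if x ∈ H then 0 else 1) ?_⟩
    intro x y hadj
    have hmem := pairGraph_nbr_mem H S hSH hindex x y hadj
    by_cases hx : x ∈ H
    · have hy : y ∉ H := hmem.1 hx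
      simp [hx, hy]
    · have hy : y ∈ H := by
        by_contra hy
        exact hx (hmem.2 hy)
      simp [hx, hy]
  intro μ hμ hμk hμmk
  obtain ⟨v, hv⟩ := hμ.exists_hasEigenvector
  have hv0 : v ≠ 0 := hv.right
  have hAv : ∀ x, ∑ y ∈ P.neighborFinset x, v y = μ * v x := by
    intro x
    have := congrFun hv.apply_eq_smul x
    rw [Matrix.toLin'_apply] at this
    simpa [A] using this
  -- sizes
  set Hf : Finset G := Finset.univ.filter (fun x => x ∈ H) with hHfdef
  set Cf : Finset G := Finset.univ.filter (fun x => x ∉ H) with hCfdef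
  have hcardG : Fintype.card G = 2 * n := by
    have := Subgroup.index_mul_card (H := H)
    rw [hindex, hn, Nat.card_eq_fintype_card] at this
    omega
  have hHf : Hf.card = n := by
    rw [hHfdef, ← Fintype.card_subtype, ← Nat.card_eq_fintype_card]
    exact hn
  have hCf : Cf.card = n := by
    have := Finset.card_filter_add_card_filter_not
      (s := (Finset.univ : Finset G)) (p := fun x => x ∈ H)
    rw [Finset.card_univ, hcardG] at this
    have h2 : Hf.card + Cf.card = 2 * n := by simpa [hHfdef, hCfdef] using this
    omega
  have hkn : k ≤ n := by
    rw [hk, Set.ncard_eq_toFinset_card', ← hCf]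
    apply Finset.card_le_card
    intro s hs
    simp only [Set.mem_toFinset] at hs
    simp [hCfdef, hSH s hs]
  have hdeg : ∀ x, (P.neighborFinset x).card = k := fun x =>
    pairGraph_degree H S hSH hindex x
  -- eigen-orthogonality to the two trivial eigenvectors
  have flip : ∀ w : G → ℝ, (A *ᵥ v) ⬝ᵥ w = (A *ᵥ w) ⬝ᵥ v := by
    intro w
    rw [dotProduct_comm, Matrix.dotProduct_mulVec]
    congr 1
    ext x
    simp [A]
  have hAvd : A *ᵥ v = μ • v := by
    ext x
    simp [A, hAv x]
  have hone : A *ᵥ (fun _ => (1:ℝ)) = (k : ℝ) • (fun _ => (1:ℝ)) := by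
    ext x
    simp [A, hdeg x]
  set χ : G → ℝ := fun x => if x ∈ H then 1 else -1 with hχdef
  have hchi : A *ᵥ χ = (-(k:ℝ)) • χ := by
    ext x
    rw [Pi.smul_apply]
    simp only [A, SimpleGraph.adjMatrix_mulVec_apply]
    by_cases hx : x ∈ H
    · have : ∀ y ∈ P.neighborFinset x, χ y = -1 := by
        intro y hy
        rw [SimpleGraph.mem_neighborFinset] at hy
        have := (pairGraph_nbr_mem H S hSH hindex x y hy).1 hx
        simp [hχdef, this]
      rw [Finset.sum_congr rfl this, Finset.sum_const, hdeg x]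
      simp [hχdef, hx]
    · have : ∀ y ∈ P.neighborFinset x, χ y = 1 := by
        intro y hy
        rw [SimpleGraph.mem_neighborFinset] at hy
        have hyH : y ∈ H := by
          by_contra hyn
          exact hx ((pairGraph_nbr_mem H S hSH hindex x y hy).2 hyn)
        simp [hχdef, hyH]
      rw [Finset.sum_congr rfl this, Finset.sum_const, hdeg x]
      simp [hχdef, hx]
  have horth : ∀ (w : G → ℝ) (c : ℝ), A *ᵥ w = c • w → μ ≠ c → v ⬝ᵥ w = 0 := by
    intro w c hw hne
    have h1 : (A *ᵥ v) ⬝ᵥ w = μ * (v ⬝ᵥ w) := by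
      rw [hAvd, smul_dotProduct]; simp
    have h2 : (A *ᵥ w) ⬝ᵥ v = c * (v ⬝ᵥ w) := by
      rw [hw, smul_dotProduct, dotProduct_comm]; simp
    have heq : μ * (v ⬝ᵥ w) = c * (v ⬝ᵥ w) := by rw [← h1, ← h2, flip w]
    by_contra h0
    exact hne (mul_right_cancel₀ h0 heq)
  have hone0 : v ⬝ᵥ (fun _ => (1:ℝ)) = 0 := horth _ _ hone hμk
  have hchi0 : v ⬝ᵥ χ = 0 := horth _ _ hchi hμmk
  -- sums over the two parts vanish
  have hsum_split : ∑ x ∈ Hf, v x + ∑ x ∈ Cf, v x = 0 := by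
    have := Finset.sum_filter_add_sum_filter_not (Finset.univ : Finset G)
      (fun x => x ∈ H) v
    rw [← hHfdef, ← hCfdef] at this
    rw [this]
    simpa [dotProduct] using hone0
  have hsum_diff : ∑ x ∈ Hf, v x - ∑ x ∈ Cf, v x = 0 := by
    have hx : v ⬝ᵥ χ = ∑ x ∈ Hf, v x - ∑ x ∈ Cf, v x := by
      rw [dotProduct]
      rw [← Finset.sum_filter_add_sum_filter_not (Finset.univ : Finset G)
        (fun x => x ∈ H) (fun x => v x * χ x), ← hHfdef, ← hCfdef]
      have e1 : ∑ x ∈ Hf, v x * χ x = ∑ x ∈ Hf, v x := by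
        apply Finset.sum_congr rfl
        intro x hx
        simp only [hHfdef, Finset.mem_filter] at hx
        simp [hχdef, hx.2]
      have e2 : ∑ x ∈ Cf, v x * χ x = -∑ x ∈ Cf, v x := by
        rw [← Finset.sum_neg_distrib]
        apply Finset.sum_congr rfl
        intro x hx
        simp only [hCfdef, Finset.mem_filter] at hx
        simp [hχdef, hx.2]
      rw [e1, e2]; ring
    rw [← hx, hchi0]
  have hsH : ∑ x ∈ Hf, v x = 0 := by linarith
  have hsC : ∑ x ∈ Cf, v x = 0 := by linarith
  -- pick a max-abs coordinate
  obtain ⟨x₀, -, hx₀max⟩ := Finset.exists_max_image (Finset.univ : Finset G)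
    (fun x => |v x|) ⟨1, Finset.mem_univ 1⟩
  set M := |v x₀| with hM
  have hMpos : 0 < M := by
    obtain ⟨z, hz⟩ := Function.ne_iff.1 hv0
    have : 0 < |v z| := abs_pos.2 hz
    exact lt_of_lt_of_le this (hx₀max z (Finset.mem_univ z))
  -- opposite part
  obtain ⟨O, hOcard, hNsub, hOsum⟩ : ∃ O : Finset G, O.card = n ∧
      P.neighborFinset x₀ ⊆ O ∧ ∑ y ∈ O, v y = 0 := by
    by_cases hx : x₀ ∈ H
    · refine ⟨Cf, hCf, ?_, hsC⟩
      intro y hy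
      rw [SimpleGraph.mem_neighborFinset] at hy
      have := (pairGraph_nbr_mem H S hSH hindex x₀ y hy).1 hx
      simp [hCfdef, this]
    · refine ⟨Hf, hHf, ?_, hsH⟩
      intro y hy
      rw [SimpleGraph.mem_neighborFinset] at hy
      have hyH : y ∈ H := by
        by_contra hyn
        exact hx ((pairGraph_nbr_mem H S hSH hindex x₀ y hy).2 hyn)
      simp [hHfdef, hyH]
  have hkey : μ * v x₀ = - ∑ y ∈ O \ P.neighborFinset x₀, v y := by
    have := Finset.sum_sdiff hNsub (f := v)
    rw [hOsum, hAv x₀] at this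
    linarith
  have hcard_sdiff : (O \ P.neighborFinset x₀).card = n - k := by
    rw [Finset.card_sdiff_of_subset hNsub, hOcard, hdeg]
  have hbound : |μ| * M ≤ ((n - k : ℕ) : ℝ) * M := by
    rw [← abs_mul, hkey, abs_neg]
    calc |∑ y ∈ O \ P.neighborFinset x₀, v y|
        ≤ ∑ y ∈ O \ P.neighborFinset x₀, |v y| := Finset.abs_sum_le_sum_abs _ _
      _ ≤ ∑ _y ∈ O \ P.neighborFinset x₀, M :=
          Finset.sum_le_sum (fun y _ => hx₀max y (Finset.mem_univ y))
      _ = ((n - k : ℕ) : ℝ) * M := by rw [Finset.sum_const, hcard_sdiff]; simp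
  have hμle : |μ| ≤ (n : ℝ) - (k : ℝ) := by
    have := le_of_mul_le_mul_right hbound hMpos
    rwa [Nat.cast_sub hkn] at this
  -- final numeric inequality
  have hn0 : (0:ℝ) ≤ (n:ℝ) := Nat.cast_nonneg n
  have hsq : Real.sqrt n ^ 2 = (n : ℝ) := Real.sq_sqrt hn0
  have hk1 : ((k:ℝ) - 1) ≥ (Real.sqrt n - 1)^2 := by nlinarith [hsize]
  have h1 : |Real.sqrt n - 1| ≤ Real.sqrt ((k:ℝ) - 1) := by
    rw [← Real.sqrt_sq_eq_abs]
    exact Real.sqrt_le_sqrt hk1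
  have h2 : Real.sqrt n - 1 ≤ Real.sqrt ((k:ℝ) - 1) :=
    le_trans (le_abs_self _) h1
  calc |μ| ≤ (n : ℝ) - (k : ℝ) := hμle
    _ ≤ 2 * Real.sqrt n - 2 := by nlinarith [hsize]
    _ ≤ 2 * Real.sqrt ((k:ℝ) - 1) := by linarith
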